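/- Let 0 < p0 < p1 < 1 and N ≥ 2 be an integer, θ ∈ (0,1]. Define g2(x) = ((p1·x^{θ/(N-θ)} + (1-p1)) / (p0·x^{θ/(N-θ)} + (1-p0)))^{N-1} for x > 0. Then g2 is strictly increasing and strictly concave on (0,∞). -/

import Mathlib

set_option maxHeartbeats 1000000

open Real Set

lemma core_ineq (p0 p1 α u : ℝ) (k : ℕ)
    (hp0 : 0 < p0) (hpp : p0 < p1) (hp1 : p1 < 1)
    (hα : 0 < α) (hαk : α * ((k : ℝ) + 1) ≤ 1) (hu : 0 < u) :
    (k : ℝ) * (p1 - p0) * α * u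
      + (α - 1) * ((p1 * u + (1 - p1)) * (p0 * u + (1 - p0)))
      - 2 * p0 * α * u * (p1 * u + (1 - p1)) < 0 := by
  have hp1' : 0 < p1 := lt_trans hp0 hpp
  set n : ℝ := p1 * u + (1 - p1) with hn_def
  set d : ℝ := p0 * u + (1 - p0) with hd_def
  have hn : 0 < n := by have := hp1'; nlinarith
  have hd : 0 < d := by nlinarith
  have h1 : (p1 - p0) * u < n * (1 - p0) := by
    have h1p1 : 0 < 1 - p1 := by linarith
    nlinarith [mul_pos hp0 hu]
  set L : ℝ := (k : ℝ) * (p1 - p0) * u + n * ((1 - p0) - p0 * u) with hL_def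
  have hgoal : (k : ℝ) * (p1 - p0) * α * u + (α - 1) * (n * d) - 2 * p0 * α * u * n
      = α * L - n * d := by rw [hL_def, hd_def]; ring
  rw [hgoal]
  rcases le_or_gt L 0 with hL | hL
  · have : α * L ≤ 0 := mul_nonpos_of_nonneg_of_nonpos hα.le hL
    nlinarith [mul_pos hn hd]
  · have hk0 : (0:ℝ) ≤ (k : ℝ) := Nat.cast_nonneg k
    have hnu : 0 < n * (p0 * u) := mul_pos hn (mul_pos hp0 hu)
    have hnd : n * d = n * (p0 * u) + n * (1 - p0) := by rw [hd_def]; ring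
    have hLexp : L = (k : ℝ) * ((p1 - p0) * u) + n * (1 - p0) - n * (p0 * u) := by
      rw [hL_def]; ring
    have h3 : (k : ℝ) * ((p1 - p0) * u) ≤ (k : ℝ) * (n * (1 - p0)) :=
      mul_le_mul_of_nonneg_left h1.le hk0
    have h2 : L < ((k : ℝ) + 1) * (n * d) := by
      have h4 : 0 ≤ (k : ℝ) * (n * (p0 * u)) := mul_nonneg hk0 hnu.le
      nlinarith [hnd, hLexp, h3, h4, hnu]
    have h3' : α * L * ((k : ℝ) + 1) ≤ L := by
      nlinarith [mul_nonneg (sub_nonneg.2 hαk) hL.le]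
    nlinarith [mul_pos hn hd]


lemma aux_Rderiv (p0 p1 α : ℝ) {x : ℝ}
    (hp0 : 0 < p0) (hpp : p0 < p1) (hp1 : p1 < 1) (hx : 0 < x) :
    HasDerivAt (fun y : ℝ => (p1 * y ^ α + (1 - p1)) / (p0 * y ^ α + (1 - p0)))
      ((p1 - p0) * α * x ^ (α - 1) / (p0 * x ^ α + (1 - p0)) ^ 2) x := by
  have hu : HasDerivAt (fun y : ℝ => y ^ α) (α * x ^ (α - 1)) x :=
    Real.hasDerivAt_rpow_const (Or.inl hx.ne')
  have hDx : 0 < p0 * x ^ α + (1 - p0) := by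
    have h1 := Real.rpow_pos_of_pos hx α
    nlinarith
  have hNd : HasDerivAt (fun y : ℝ => p1 * y ^ α + (1 - p1)) (p1 * (α * x ^ (α - 1))) x :=
    (hu.const_mul p1).add_const _
  have hDd : HasDerivAt (fun y : ℝ => p0 * y ^ α + (1 - p0)) (p0 * (α * x ^ (α - 1))) x :=
    (hu.const_mul p0).add_const _
  have := hNd.div hDd hDx.ne'
  refine this.congr_deriv ?_
  rw [div_eq_div_iff (by positivity) (by positivity)]
  ring

lemma aux_deriv2 (p0 p1 α : ℝ) (m : ℕ) {x : ℝ}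
    (hp0 : 0 < p0) (hpp : p0 < p1) (hp1 : p1 < 1)
    (hα0 : 0 < α) (hαm : α * m ≤ 1) (hm : 1 ≤ m) (hx : 0 < x) :
    ∃ e, HasDerivAt (fun y : ℝ =>
        (m : ℝ) * ((p1 * y ^ α + (1 - p1)) / (p0 * y ^ α + (1 - p0))) ^ (m - 1)
          * ((p1 - p0) * α * y ^ (α - 1) / (p0 * y ^ α + (1 - p0)) ^ 2)) e x ∧ e < 0 := by
  have hDx : 0 < p0 * x ^ α + (1 - p0) := by
    have h1 := Real.rpow_pos_of_pos hx α
    nlinarith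
  have hu : HasDerivAt (fun y : ℝ => y ^ α) (α * x ^ (α - 1)) x :=
    Real.hasDerivAt_rpow_const (Or.inl hx.ne')
  have hDd : HasDerivAt (fun y : ℝ => p0 * y ^ α + (1 - p0)) (p0 * (α * x ^ (α - 1))) x :=
    (hu.const_mul p0).add_const _
  have hQ1 := (aux_Rderiv p0 p1 α hp0 hpp hp1 hx).pow (m - 1)
  have hw1 : HasDerivAt (fun y : ℝ => y ^ (α - 1)) ((α - 1) * x ^ (α - 1 - 1)) x :=
    Real.hasDerivAt_rpow_const (Or.inl hx.ne')
  have hQ2 := ((hw1.const_mul ((p1 - p0) * α)).div (hDd.pow 2) (pow_ne_zero 2 hDx.ne'))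
  have hF := (hQ1.const_mul ((m : ℝ))).mul hQ2
  refine ⟨_, hF, ?_⟩
  set u := x ^ α with hu_def
  have hu0 : 0 < u := Real.rpow_pos_of_pos hx α
  have hw : x ^ (α - 1) = u / x := by
    rw [Real.rpow_sub hx, Real.rpow_one, ← hu_def]
  have hw2 : x ^ (α - 1 - 1) = u / x / x := by
    rw [Real.rpow_sub hx, Real.rpow_one, hw]
  rw [hw, hw2]
  have hΔ : 0 < p1 - p0 := sub_pos.2 hpp
  have hn : 0 < p1 * u + (1 - p1) := by nlinarith [mul_pos (lt_trans hp0 hpp) hu0]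
  have hr : 0 < (p1 * u + (1 - p1)) / (p0 * u + (1 - p0)) := div_pos hn hDx
  rcases Nat.eq_zero_or_pos (m - 1) with hk | hk
  · have hm1 : m = 1 := by omega
    subst hm1
    have hα1 : α ≤ 1 := by push_cast at hαm; linarith
    have hK : (p0 * u + (1 - p0)) * ((α - 1) * (p0 * u + (1 - p0)) - 2 * p0 * α * u) < 0 := by
      nlinarith [mul_pos hDx hDx, mul_pos (mul_pos hp0 hα0) hu0, mul_pos hα0 hu0]
    have hC : 0 < (1 : ℝ) * (p1 - p0) * α * u / (x ^ 2 * (p0 * u + (1 - p0)) ^ 4) := by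
      apply div_pos
      · nlinarith [mul_pos (mul_pos hΔ hα0) hu0]
      · positivity
    have hfin := mul_neg_of_pos_of_neg hC hK
    refine lt_of_eq_of_lt ?_ hfin
    norm_num
    have hx0 := hx.ne'
    have hD0 := hDx.ne'
    simp only [← hu_def]
    field_simp
  · obtain ⟨j, hj⟩ : ∃ j, m - 1 = j + 1 := ⟨m - 2, by omega⟩
    rw [hj, Nat.add_sub_cancel, pow_succ]
    have hmj : m = j + 2 := by omega
    have hαk : α * ((((j : ℕ) + 1 : ℕ) : ℝ) + 1) ≤ 1 := by
      subst hmj; push_cast at hαm ⊢; linarith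
    have key := core_ineq p0 p1 α u (j + 1) hp0 hpp hp1 hα0 hαk hu0
    have hC : 0 < (m : ℝ) * (p1 - p0) * α * u
        * ((p1 * u + (1 - p1)) / (p0 * u + (1 - p0))) ^ j
        / (x ^ 2 * (p0 * u + (1 - p0)) ^ 4) := by
      apply div_pos
      · have hmR : 0 < (m : ℝ) := by exact_mod_cast Nat.pos_of_ne_zero (by omega)
        exact mul_pos (mul_pos (mul_pos (mul_pos hmR hΔ) hα0) hu0) (pow_pos hr j)
      · positivity
    have hfin := mul_neg_of_pos_of_neg hC key
    refine lt_of_eq_of_lt ?_ hfin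
    push_cast
    norm_num
    have hx0 := hx.ne'
    have hD0 := hDx.ne'
    simp only [← hu_def, hw, pow_succ _ j]
    generalize ((p1 * u + (1 - p1)) / (p0 * u + (1 - p0))) ^ j = R
    field_simp
    ring


lemma aux_main (p0 p1 α : ℝ) (m : ℕ)
    (hp0 : 0 < p0) (hpp : p0 < p1) (hp1 : p1 < 1)
    (hα0 : 0 < α) (hαm : α * m ≤ 1) (hm : 1 ≤ m) :
    StrictMonoOn
      (fun x : ℝ => ((p1 * x ^ α + (1 - p1)) / (p0 * x ^ α + (1 - p0))) ^ m) (Set.Ioi 0) ∧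
    StrictConcaveOn ℝ (Set.Ioi 0)
      (fun x : ℝ => ((p1 * x ^ α + (1 - p1)) / (p0 * x ^ α + (1 - p0))) ^ m) := by
  set F : ℝ → ℝ := fun x =>
      (m : ℝ) * ((p1 * x ^ α + (1 - p1)) / (p0 * x ^ α + (1 - p0))) ^ (m - 1)
        * ((p1 - p0) * α * x ^ (α - 1) / (p0 * x ^ α + (1 - p0)) ^ 2) with hF_def
  have hd1 : ∀ x ∈ Set.Ioi (0:ℝ),
      HasDerivAt (fun x : ℝ => ((p1 * x ^ α + (1 - p1)) / (p0 * x ^ α + (1 - p0))) ^ m)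
        (F x) x := fun x hx => (aux_Rderiv p0 p1 α hp0 hpp hp1 hx).pow m
  have hcont : ContinuousOn
      (fun x : ℝ => ((p1 * x ^ α + (1 - p1)) / (p0 * x ^ α + (1 - p0))) ^ m) (Set.Ioi 0) :=
    fun x hx => (hd1 x hx).differentiableAt.continuousAt.continuousWithinAt
  have hFpos : ∀ x ∈ Set.Ioi (0:ℝ), 0 < F x := by
    intro x hx
    have hx0 : (0:ℝ) < x := hx
    have hΔ : 0 < p1 - p0 := sub_pos.2 hpp
    have hu0 : 0 < x ^ α := Real.rpow_pos_of_pos hx0 α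
    have hDx : 0 < p0 * x ^ α + (1 - p0) := by nlinarith
    have hn : 0 < p1 * x ^ α + (1 - p1) := by
      nlinarith [mul_pos (lt_trans hp0 hpp) hu0]
    have hmR : 0 < (m : ℝ) := by exact_mod_cast Nat.pos_of_ne_zero (by omega)
    have hr : 0 < (p1 * x ^ α + (1 - p1)) / (p0 * x ^ α + (1 - p0)) := div_pos hn hDx
    exact mul_pos (mul_pos hmR (pow_pos hr _))
      (div_pos (mul_pos (mul_pos hΔ hα0) (Real.rpow_pos_of_pos hx0 _)) (by positivity))
  constructor
  · apply strictMonoOn_of_deriv_pos (convex_Ioi 0) hcont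
    intro x hx
    rw [interior_Ioi] at hx
    rw [(hd1 x hx).deriv]
    exact hFpos x hx
  · apply strictConcaveOn_of_deriv2_neg (convex_Ioi 0) hcont
    intro x hx
    rw [interior_Ioi] at hx
    obtain ⟨e, he, hneg⟩ := aux_deriv2 p0 p1 α m hp0 hpp hp1 hα0 hαm hm hx
    have hfd : deriv (fun x : ℝ =>
        ((p1 * x ^ α + (1 - p1)) / (p0 * x ^ α + (1 - p0))) ^ m) =ᶠ[nhds x] F :=
      Filter.eventuallyEq_of_mem (isOpen_Ioi.mem_nhds hx) (fun y hy => (hd1 y hy).deriv)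
    show deriv (deriv (fun x : ℝ =>
        ((p1 * x ^ α + (1 - p1)) / (p0 * x ^ α + (1 - p0))) ^ m)) x < 0
    rw [hfd.deriv_eq, he.deriv]
    exact hneg

theorem stmt8 (p0 p1 θ : ℝ) (N : ℕ)
    (hp00 : 0 < p0) (hpp : p0 < p1) (hp11 : p1 < 1)
    (hθ0 : 0 < θ) (hθ1 : θ ≤ 1) (hN : 2 ≤ N) :
    let g2 : ℝ → ℝ := fun x =>
      ((p1 * x ^ (θ / ((N : ℝ) - θ)) + (1 - p1)) /
        (p0 * x ^ (θ / ((N : ℝ) - θ)) + (1 - p0))) ^ (N - 1)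
    StrictMonoOn g2 (Set.Ioi (0 : ℝ)) ∧ StrictConcaveOn ℝ (Set.Ioi (0 : ℝ)) g2 := by
  intro g2
  have hN2 : (2:ℝ) ≤ (N : ℝ) := by exact_mod_cast hN
  have hNθ : (0:ℝ) < (N : ℝ) - θ := by linarith
  have hα0 : 0 < θ / ((N : ℝ) - θ) := div_pos hθ0 hNθ
  have hcast : ((N - 1 : ℕ) : ℝ) = (N : ℝ) - 1 := by
    have : 1 ≤ N := by omega
    push_cast [this]
    ring
  have hαm : θ / ((N : ℝ) - θ) * ((N - 1 : ℕ) : ℝ) ≤ 1 := by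
    rw [hcast, div_mul_eq_mul_div, div_le_one hNθ]
    nlinarith
  exact aux_main p0 p1 (θ / ((N : ℝ) - θ)) (N - 1) hp00 hpp hp11 hα0 hαm (by omega)
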